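/- (Theorem 1) For every integer k ≥ 1 and every n ∈ ℤ, ∑_{j=0}^{k+1} (−1)^{binom(j+1,2)} · s^{binom(j,2)} · q^{j(j−1)(2j−1)/6} · ⟨k+1, j⟩(x,s,q) · f(n−j, x, q^j·s)^k = 0, provided all factors appearing in the denominators of the q-fibonomial coefficients ⟨k+1, j⟩(x,s,q), 0 ≤ j ≤ k+1, are nonzero. (Here j(j−1)(2j−1)/6 = ∑_{i=0}^{j−1} i^2.) -/

import Mathlib

open Finset

variable {K : Type*} [Field K]

noncomputable def qFibPos (q x t : K) : ℕ → K
  | 0 => 0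
  | 1 => 1
  | n + 2 => x * qFibPos q x t (n + 1) + q ^ n * t * qFibPos q x t n

noncomputable def qFibNeg (q x t : K) : ℕ → K
  | 0 => 0
  | 1 => q / t
  | m + 2 => (qFibNeg q x t m - x * qFibNeg q x t (m + 1)) * q ^ (m + 2) / t

/-- The Carlitz q-Fibonacci polynomial `f(n, x, t)` for `n : ℤ`, defined by `f 0 = 0`,
`f 1 = 1` and `f n = x * f (n-1) + q^(n-2) * t * f (n-2)`, solved backwards for `n < 0`. -/
noncomputable def qFib (q x t : K) : ℤ → K
  | Int.ofNat n => qFibPos q x t n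
  | Int.negSucc m => qFibNeg q x t (m + 1)

/-- The q-analog of the fibonomial coefficient
`⟨k, j⟩(x,s,q) = (∏_{i=1}^{k} f(i,x,s)) / (∏_{i=1}^{j} f(i,x,q^{j-i}s) · ∏_{i=1}^{k-j} f(i,x,q^j s))`. -/
noncomputable def qFibonomial (q x s : K) (k j : ℕ) : K :=
  (∏ i ∈ Finset.range k, qFib q x s (i + 1)) /
    ((∏ i ∈ Finset.range j, qFib q x (q ^ (j - (i + 1)) * s) (i + 1)) *
      (∏ i ∈ Finset.range (k - j), qFib q x (q ^ j * s) (i + 1)))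

section basic
variable (q x t : K)

lemma qFib_natCast (n : ℕ) : qFib q x t (n : ℤ) = qFibPos q x t n := rfl
lemma qFib_negSucc (m : ℕ) : qFib q x t (Int.negSucc m) = qFibNeg q x t (m + 1) := rfl
lemma qFib_zero : qFib q x t 0 = 0 := rfl
lemma qFib_one : qFib q x t 1 = 1 := rfl
lemma qFib_neg_one : qFib q x t (-1) = q / t := rfl
lemma qFib_neg_two : qFib q x t (-2) = (0 - x * (q / t)) * q ^ 2 / t := rfl

lemma qFib_rec (hq : q ≠ 0) (ht : t ≠ 0) (n : ℤ) :
    qFib q x t (n + 2) = x * qFib q x t (n + 1) + q ^ n * t * qFib q x t n := by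
  cases n with
  | ofNat m =>
    have h0 : (Int.ofNat m : ℤ) = (m : ℤ) := rfl
    rw [h0, show (m : ℤ) + 2 = ((m + 2 : ℕ) : ℤ) by push_cast; ring,
      show (m : ℤ) + 1 = ((m + 1 : ℕ) : ℤ) by push_cast; ring,
      qFib_natCast, qFib_natCast, qFib_natCast, zpow_natCast]
    rfl
  | negSucc m =>
    match m with
    | 0 =>
      show qFib q x t 1 = x * qFib q x t 0 + q ^ (-1 : ℤ) * t * qFib q x t (-1)
      rw [qFib_one, qFib_zero, qFib_neg_one]
      field_simp
      ring
    | 1 =>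
      show qFib q x t 0 = x * qFib q x t (-1) + q ^ (-2 : ℤ) * t * qFib q x t (-2)
      rw [qFib_zero, qFib_neg_one, qFib_neg_two]
      have : (q:K) ^ (-2 : ℤ) = (q ^ 2)⁻¹ := by
        rw [zpow_neg, zpow_ofNat]
      rw [this]
      field_simp
      ring
    | m + 2 =>
      have e2 : Int.negSucc (m + 2) + 2 = Int.negSucc m := by
        simp [Int.negSucc_eq]; ring
      have e1 : Int.negSucc (m + 2) + 1 = Int.negSucc (m + 1) := by
        simp [Int.negSucc_eq]; ring
      rw [e2, e1, qFib_negSucc, qFib_negSucc, qFib_negSucc, zpow_negSucc]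
      show qFibNeg q x t (m + 1) = x * qFibNeg q x t (m + 2) +
        (q ^ (m + 3))⁻¹ * t * ((qFibNeg q x t (m+1) - x * qFibNeg q x t (m + 2)) * q ^ (m + 3) / t)
      field_simp
      ring

end basic

section diag
variable (q x : K)

private def DiagP (q x t : K) (n : ℤ) : Prop :=
  qFib q x t n = x * qFib q x (q * t) (n - 1) + q * t * qFib q x (q ^ 2 * t) (n - 2)

lemma diag_up (hq : q ≠ 0) {t : K} (ht : t ≠ 0) (n : ℤ)
    (h1 : DiagP q x t n) (h2 : DiagP q x t (n + 1)) : DiagP q x t (n + 2) := by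
  have hqt : q * t ≠ 0 := mul_ne_zero hq ht
  have hq2t : q ^ 2 * t ≠ 0 := mul_ne_zero (pow_ne_zero 2 hq) ht
  have r1 := qFib_rec q x t hq ht n
  have r2 := qFib_rec q x (q * t) hq hqt (n - 1)
  have r3 := qFib_rec q x (q ^ 2 * t) hq hq2t (n - 2)
  rw [show n - 1 + 2 = n + 1 by ring, show n - 1 + 1 = n by ring] at r2
  rw [show n - 2 + 2 = n by ring, show n - 2 + 1 = n - 1 by ring] at r3
  unfold DiagP at h1 h2 ⊢
  rw [show n + 1 - 1 = n by ring, show n + 1 - 2 = n - 1 by ring] at h2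
  rw [show n + 2 - 1 = n + 1 by ring, show n + 2 - 2 = n by ring]
  have e1 : q ^ n = q ^ (n - 2) * q * q := by
    conv_lhs => rw [show n = n - 2 + 1 + 1 by ring]
    rw [zpow_add₀ hq, zpow_add₀ hq, zpow_one]
  have e2 : q ^ (n - 1) = q ^ (n - 2) * q := by
    conv_lhs => rw [show n - 1 = n - 2 + 1 by ring]
    rw [zpow_add₀ hq, zpow_one]
  rw [e1] at r1
  rw [e2] at r2
  linear_combination r1 + x * h2 + q ^ (n-2) * q * q * t * h1 - x * r2 - q * t * r3

lemma diag_down (hq : q ≠ 0) {t : K} (ht : t ≠ 0) (n : ℤ)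
    (h1 : DiagP q x t (n + 1)) (h2 : DiagP q x t (n + 2)) : DiagP q x t n := by
  have hqt : q * t ≠ 0 := mul_ne_zero hq ht
  have hq2t : q ^ 2 * t ≠ 0 := mul_ne_zero (pow_ne_zero 2 hq) ht
  have r1 := qFib_rec q x t hq ht n
  have r2 := qFib_rec q x (q * t) hq hqt (n - 1)
  have r3 := qFib_rec q x (q ^ 2 * t) hq hq2t (n - 2)
  rw [show n - 1 + 2 = n + 1 by ring, show n - 1 + 1 = n by ring] at r2
  rw [show n - 2 + 2 = n by ring, show n - 2 + 1 = n - 1 by ring] at r3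
  unfold DiagP at h1 h2 ⊢
  rw [show n + 1 - 1 = n by ring, show n + 1 - 2 = n - 1 by ring] at h1
  rw [show n + 2 - 1 = n + 1 by ring, show n + 2 - 2 = n by ring] at h2
  have e1 : q ^ n = q ^ (n - 2) * q * q := by
    conv_lhs => rw [show n = n - 2 + 1 + 1 by ring]
    rw [zpow_add₀ hq, zpow_add₀ hq, zpow_one]
  have e2 : q ^ (n - 1) = q ^ (n - 2) * q := by
    conv_lhs => rw [show n - 1 = n - 2 + 1 by ring]
    rw [zpow_add₀ hq, zpow_one]
  rw [e1] at r1
  rw [e2] at r2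
  have hX : q ^ (n - 2) * q * q * t ≠ 0 :=
    mul_ne_zero (mul_ne_zero (mul_ne_zero (zpow_ne_zero _ hq) hq) hq) ht
  apply mul_left_cancel₀ hX
  linear_combination (q ^ (n - 2) * q * q * t) * (x * qFib q x (q*t) (n-1)) +
    (q ^ (n - 2) * q * q * t) * (q * t * qFib q x (q^2*t) (n-2)) +
    h2 - r1 - x * h1 + x * r2 + q * t * r3

lemma qFib_diag (hq : q ≠ 0) {t : K} (ht : t ≠ 0) (n : ℤ) :
    qFib q x t n = x * qFib q x (q * t) (n - 1) + q * t * qFib q x (q ^ 2 * t) (n - 2) := by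
  have hqt : q * t ≠ 0 := mul_ne_zero hq ht
  have hq2t : q ^ 2 * t ≠ 0 := mul_ne_zero (pow_ne_zero 2 hq) ht
  have base0 : DiagP q x t 0 := by
    unfold DiagP
    rw [qFib_zero, show (0:ℤ) - 1 = -1 by ring, show (0:ℤ) - 2 = -2 by ring,
      qFib_neg_one, qFib_neg_two]
    field_simp
    ring
  have base1 : DiagP q x t 1 := by
    unfold DiagP
    rw [qFib_one, show (1:ℤ) - 1 = 0 by ring, show (1:ℤ) - 2 = -1 by ring,
      qFib_zero, qFib_neg_one]
    field_simp
    ring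
  have main : ∀ n : ℤ, DiagP q x t n ∧ DiagP q x t (n + 1) := by
    intro n
    induction n using Int.induction_on with
    | zero => exact ⟨base0, by rwa [zero_add]⟩
    | succ i ih =>
      refine ⟨ih.2, ?_⟩
      have := diag_up q x hq ht i ih.1 ih.2
      rwa [show (i:ℤ) + 2 = (i:ℤ) + 1 + 1 by ring] at this
    | pred i ih =>
      constructor
      · apply diag_down q x hq ht (-(i:ℤ) - 1)
        · rw [show -(i:ℤ) - 1 + 1 = -(i:ℤ) by ring]; exact ih.1
        · rw [show -(i:ℤ) - 1 + 2 = -(i:ℤ) + 1 by ring]; exact ih.2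
      · rw [show -(i:ℤ) - 1 + 1 = -(i:ℤ) by ring]; exact ih.1
  exact (main n).1

end diag

section dseq
variable (q x s : K)

noncomputable def Dseq (q x s : K) (m : ℤ) (j : ℕ) : K := qFib q x (q ^ j * s) (m - j)

lemma Dseq_diag (hq : q ≠ 0) (hs : s ≠ 0) (m : ℤ) (j : ℕ) :
    Dseq q x s m j = x * Dseq q x s m (j+1) + q^(j+1) * s * Dseq q x s m (j+2) := by
  have ht : q ^ j * s ≠ 0 := mul_ne_zero (pow_ne_zero _ hq) hs
  have h := qFib_diag q x hq ht (m - j)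
  unfold Dseq
  rw [show q * (q^j*s) = q^(j+1)*s by ring, show q^2*(q^j*s) = q^(j+2)*s by ring] at h
  rw [show m - (j:ℤ) - 1 = m - ((j+1:ℕ):ℤ) by push_cast; ring,
      show m - (j:ℤ) - 2 = m - ((j+2:ℕ):ℤ) by push_cast; ring] at h
  exact h

lemma Dseq_zero_zero : Dseq q x s 0 0 = 0 := by
  unfold Dseq; norm_num [qFib_zero]
lemma Dseq_one_zero : Dseq q x s 1 0 = 1 := by
  unfold Dseq; norm_num [qFib_one]
lemma Dseq_zero_one : Dseq q x s 0 1 = q / (q^1 * s) := by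
  unfold Dseq
  norm_num [qFib_neg_one]
lemma Dseq_one_one : Dseq q x s 1 1 = 0 := by
  unfold Dseq; norm_num [qFib_zero]

lemma Dseq_expand (hq : q ≠ 0) (hs : s ≠ 0) (m : ℤ) (j : ℕ) :
    Dseq q x s m j =
      (s * Dseq q x s m 1) * Dseq q x s 0 j + (Dseq q x s m 0) * Dseq q x s 1 j := by
  induction j using Nat.twoStepInduction with
  | zero =>
    rw [Dseq_zero_zero, Dseq_one_zero]; ring
  | one =>
    rw [Dseq_zero_one, Dseq_one_one]
    field_simp
    ring
  | more j ih1 ih2 =>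
    have hX : q^(j+1) * s ≠ 0 := mul_ne_zero (pow_ne_zero _ hq) hs
    have dA := Dseq_diag q x s hq hs m j
    have dB := Dseq_diag q x s hq hs 0 j
    have dC := Dseq_diag q x s hq hs 1 j
    apply mul_left_cancel₀ hX
    linear_combination -dA + ih1 - x * ih2 + (s * Dseq q x s m 1) * dB + (Dseq q x s m 0) * dC

end dseq

section cas
variable (q x s : K)

private lemma ch2succ (n : ℕ) : (n+1).choose 2 = n + n.choose 2 := by
  rw [Nat.choose_succ_succ, Nat.choose_one_right]

lemma cas_one (hq : q ≠ 0) (hs : s ≠ 0) (r : ℕ) :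
    (Dseq q x s 0 r * Dseq q x s 1 (r+1) - Dseq q x s 0 (r+1) * Dseq q x s 1 r) *
      q ^ ((r+1).choose 2) * s ^ (r+1) = (-1 : K) ^ (r+1) := by
  induction r with
  | zero =>
    rw [Dseq_zero_zero, Dseq_one_zero, Dseq_zero_one, Dseq_one_one]
    field_simp
    norm_num
  | succ r ih =>
    have hX : q^(r+1) * s ≠ 0 := mul_ne_zero (pow_ne_zero _ hq) hs
    have dU := Dseq_diag q x s hq hs 0 r
    have dV := Dseq_diag q x s hq hs 1 r
    have hkey : Dseq q x s 0 r * Dseq q x s 1 (r+1) - Dseq q x s 0 (r+1) * Dseq q x s 1 r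
        = -(q^(r+1) * s * (Dseq q x s 0 (r+1) * Dseq q x s 1 (r+2)
            - Dseq q x s 0 (r+2) * Dseq q x s 1 (r+1))) := by
      linear_combination Dseq q x s 1 (r+1) * dU - Dseq q x s 0 (r+1) * dV
    rw [hkey] at ih
    rw [show r+1+1 = r+2 by ring] at *
    rw [show (r+2).choose 2 = (r+1) + (r+1).choose 2 from ch2succ (r+1)]
    rw [pow_add, pow_succ (s) (r+1), pow_succ (-1:K) (r+1)]
    linear_combination -ih

lemma cas_formula (hq : q ≠ 0) (hs : s ≠ 0) (r d : ℕ) :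
    (Dseq q x s 0 r * Dseq q x s 1 (r+d) - Dseq q x s 0 (r+d) * Dseq q x s 1 r) *
      q ^ ((r+d).choose 2) * s ^ (r+d)
    = (-1 : K) ^ (r+d) * qFib q x (q^r * s) (d : ℤ) := by
  induction d using Nat.twoStepInduction with
  | zero =>
    simp only [Nat.cast_zero, qFib_zero, Nat.add_zero]
    ring
  | one =>
    simp only [Nat.cast_one, qFib_one, mul_one]
    exact cas_one q x s hq hs r
  | more d ih1 ih2 =>
    have ht : q ^ r * s ≠ 0 := mul_ne_zero (pow_ne_zero _ hq) hs
    have hX : q^((r+d)+1) * s ≠ 0 := mul_ne_zero (pow_ne_zero _ hq) hs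
    have dU := Dseq_diag q x s hq hs 0 (r+d)
    have dV := Dseq_diag q x s hq hs 1 (r+d)
    have frec := qFib_rec q x (q^r*s) hq ht (d : ℤ)
    rw [show ((d:ℤ)+2) = ((d+2:ℕ) : ℤ) by push_cast; ring,
        show ((d:ℤ)+1) = ((d+1:ℕ) : ℤ) by push_cast; ring, zpow_natCast] at frec
    rw [show r+(d+1) = (r+d)+1 by ring, ch2succ (r+d)] at ih2
    have gkey : Dseq q x s 0 r * Dseq q x s 1 (r+d) - Dseq q x s 0 (r+d) * Dseq q x s 1 r
        = x * (Dseq q x s 0 r * Dseq q x s 1 ((r+d)+1)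
            - Dseq q x s 0 ((r+d)+1) * Dseq q x s 1 r)
          + q^((r+d)+1) * s * (Dseq q x s 0 r * Dseq q x s 1 ((r+d)+2)
            - Dseq q x s 0 ((r+d)+2) * Dseq q x s 1 r) := by
      linear_combination (Dseq q x s 0 r) * dV - (Dseq q x s 1 r) * dU
    rw [show r+(d+2) = (r+d)+2 by ring]
    rw [ch2succ ((r+d)+1), ch2succ (r+d)]
    apply mul_left_cancel₀ hX
    linear_combination (-(q^(2*(r+d)+1) * q^((r+d).choose 2) * s^((r+d)+2))) * gkey
      + (q^((r+d)+1) * q^(r+d) * s^2) * ih1 + (-(x * q^((r+d)+1) * s)) * ih2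
      + (-(q^((r+d)+1) * s * (-1:K)^(r+d))) * frec
end cas

section vdm
open Matrix

lemma prod_Ioi_fun {M : Type*} [CommMonoid M] {n : ℕ} (h : Fin n → M) :
    ∏ r : Fin n, ∏ r' ∈ Finset.Ioi r, h r' = ∏ r' : Fin n, h r' ^ (r' : ℕ) := by
  rw [Finset.prod_comm' (s := Finset.univ) (t := fun r => Finset.Ioi r)
    (t' := Finset.univ) (s' := fun r' => Finset.Iio r')
    (by intro r r'; simp [Finset.mem_Ioi, Finset.mem_Iio])]
  refine Finset.prod_congr rfl fun r' _ => ?_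
  rw [Finset.prod_const, Fin.card_Iio]

lemma prod_Ioi_mul_self {M : Type*} [CommMonoid M] {n : ℕ} (v : Fin n → M) :
    ∏ r : Fin n, ∏ r' ∈ Finset.Ioi r, (v r * v r') = ∏ r : Fin n, v r ^ (n - 1) := by
  have h1 : ∏ r : Fin n, ∏ r' ∈ Finset.Ioi r, (v r * v r')
      = (∏ r : Fin n, v r ^ (n - 1 - (r : ℕ))) * ∏ r' : Fin n, v r' ^ (r' : ℕ) := by
    rw [← prod_Ioi_fun v, ← Finset.prod_mul_distrib]
    refine Finset.prod_congr rfl fun r _ => ?_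
    rw [Finset.prod_mul_distrib, Finset.prod_const, Fin.card_Ioi]
  rw [h1, ← Finset.prod_mul_distrib]
  refine Finset.prod_congr rfl fun r _ => ?_
  rw [← pow_add]
  congr 1
  have := r.isLt
  omega

lemma hvdm_field {F : Type*} [Field F] {n : ℕ} (u v : Fin n → F) (hv : ∀ r, v r ≠ 0) :
    (Matrix.of fun i r : Fin n => u r ^ (i : ℕ) * v r ^ (n - 1 - (i : ℕ))).det
      = ∏ r : Fin n, ∏ r' ∈ Finset.Ioi r, (u r' * v r - u r * v r') := by
  have key : (Matrix.of fun i r : Fin n => u r ^ (i : ℕ) * v r ^ (n - 1 - (i : ℕ)))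
      = Matrix.of (fun i r : Fin n => (v r) ^ (n - 1) *
          ((vandermonde fun j => u j / v j).transpose i r)) := by
    ext i r
    have hle : (i : ℕ) ≤ n - 1 := by have := i.isLt; omega
    simp only [Matrix.of_apply, Matrix.transpose_apply, Matrix.vandermonde_apply]
    have hsplit : (v r) ^ (n-1) = v r ^ (n - 1 - (i:ℕ)) * v r ^ (i:ℕ) := by
      rw [← pow_add]; congr 1; omega
    have hvr := hv r
    have hvi : v r ^ (i:ℕ) ≠ 0 := pow_ne_zero _ hvr
    rw [div_pow, hsplit, mul_assoc, mul_div_cancel₀ _ hvi, mul_comm]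
  rw [key, Matrix.det_mul_row, Matrix.det_transpose, Matrix.det_vandermonde,
    ← prod_Ioi_mul_self v, ← Finset.prod_mul_distrib]
  refine Finset.prod_congr rfl fun r _ => ?_
  rw [← Finset.prod_mul_distrib]
  refine Finset.prod_congr rfl fun r' _ => ?_
  have h1 := hv r
  have h2 := hv r'
  field_simp

lemma hvdm {n : ℕ} (u v : Fin n → K) :
    (Matrix.of fun i r : Fin n => u r ^ (i : ℕ) * v r ^ (n - 1 - (i : ℕ))).det
      = ∏ r : Fin n, ∏ r' ∈ Finset.Ioi r, (u r' * v r - u r * v r') := by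
  set uP : Fin n → Polynomial K := fun r => Polynomial.C (u r) with huP
  set vP : Fin n → Polynomial K := fun r => Polynomial.X + Polynomial.C (v r) with hvP
  have main : (Matrix.of fun i r : Fin n => uP r ^ (i : ℕ) * vP r ^ (n - 1 - (i : ℕ))).det
      = ∏ r : Fin n, ∏ r' ∈ Finset.Ioi r, (uP r' * vP r - uP r * vP r') := by
    apply RatFunc.algebraMap_injective K
    set φ := algebraMap (Polynomial K) (RatFunc K) with hφ
    rw [RingHom.map_det]
    have hmat : φ.mapMatrix (Matrix.of fun i r : Fin n => uP r ^ (i:ℕ) * vP r ^ (n-1-(i:ℕ)))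
        = Matrix.of fun i r : Fin n => (φ (uP r)) ^ (i:ℕ) * (φ (vP r)) ^ (n-1-(i:ℕ)) := by
      ext i r
      simp [RingHom.mapMatrix_apply]
    rw [hmat, hvdm_field (fun r => φ (uP r)) (fun r => φ (vP r))
      (fun r => by
        rw [hφ]
        simp only [ne_eq, map_eq_zero_iff _ (RatFunc.algebraMap_injective K)]
        exact Polynomial.X_add_C_ne_zero (v r))]
    rw [map_prod]
    refine Finset.prod_congr rfl fun r _ => ?_
    rw [map_prod]
    refine Finset.prod_congr rfl fun r' _ => ?_
    rw [map_sub, _root_.map_mul, _root_.map_mul]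
  have := congrArg (Polynomial.evalRingHom (0 : K)) main
  rw [RingHom.map_det] at this
  have hmat2 : (Polynomial.evalRingHom (0:K)).mapMatrix
        (Matrix.of fun i r : Fin n => uP r ^ (i:ℕ) * vP r ^ (n-1-(i:ℕ)))
      = Matrix.of fun i r : Fin n => u r ^ (i:ℕ) * v r ^ (n-1-(i:ℕ)) := by
    ext i r
    simp [RingHom.mapMatrix_apply, huP, hvP]
  rw [hmat2] at this
  rw [this, map_prod]
  refine Finset.prod_congr rfl fun r _ => ?_
  rw [map_prod]
  refine Finset.prod_congr rfl fun r' _ => ?_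
  simp [huP, hvP]

end vdm

section comb
variable (q x s : K)

/-- `g r u = f(u - r, x, q^r s)` -/
noncomputable def gfun (q x s : K) (r u : ℕ) : K := qFib q x (q ^ r * s) ((u : ℤ) - r)
/-- positive part of the Casoratian unit -/
noncomputable def HPfun (q s : K) (u : ℕ) : K := (q ^ (u.choose 2))⁻¹ * (s ^ u)⁻¹
/-- `succAbove` on ℕ -/
def mySA (j i : ℕ) : ℕ := if i < j then i else i + 1

noncomputable def eprodP (q s : K) (k j : ℕ) : K :=
  ∏ i ∈ Finset.range (k+1), HPfun q s (mySA j i) ^ i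
def sexp (k j : ℕ) : ℕ := ∑ i ∈ Finset.range (k+1), i * (mySA j i + 1)
noncomputable def fprod (q x s : K) (k j : ℕ) : K :=
  ∏ r ∈ Finset.range (k+1), ∏ u ∈ Finset.Ico (r+1) (k+1), gfun q x s (mySA j r) (mySA j u)
noncomputable def denp (q x s : K) (k j : ℕ) : K :=
  (∏ r ∈ Finset.range j, gfun q x s r j) * ∏ u ∈ Finset.Ico (j+1) (k+2), gfun q x s j u
noncomputable def Phi (q x s : K) (k : ℕ) : K :=
  ∏ r ∈ Finset.range (k+2), ∏ u ∈ Finset.Ico (r+1) (k+2), gfun q x s r u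
noncomputable def prefP (q s : K) (j : ℕ) : K :=
  s ^ (j.choose 2) * q ^ (∑ i ∈ Finset.range j, i^2)

lemma mySA_lt (j : ℕ) : StrictMono (mySA j) := by
  intro a b h
  unfold mySA
  split_ifs <;> omega

lemma mySA_eq_of_ne (j r : ℕ) (h : r ≠ j) : mySA (j+1) r = mySA j r := by
  unfold mySA
  split_ifs <;> omega

lemma mySA_le (j i : ℕ) : mySA j i ≤ i + 1 := by unfold mySA; split_ifs <;> omega

/-- generic split of the pair-product at an index `j ≤ k`. -/
lemma split_pairs (G : ℕ → ℕ → K) {k j : ℕ} (hj : j ≤ k) :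
    ∏ r ∈ Finset.range (k+1), ∏ u ∈ Finset.Ico (r+1) (k+1), G r u
      = (∏ r ∈ Finset.range j, G r j) * (∏ u ∈ Finset.Ico (j+1) (k+1), G j u) *
        ∏ r ∈ (Finset.range (k+1)).erase j,
          ∏ u ∈ (Finset.Ico (r+1) (k+1)).erase j, G r u := by
  have hjmem : j ∈ Finset.range (k+1) := Finset.mem_range.2 (by omega)
  rw [← Finset.mul_prod_erase _ _ hjmem]
  have hrow : ∏ u ∈ Finset.Ico (j+1) (k+1), G j u
      = ∏ u ∈ (Finset.Ico (j+1) (k+1)).erase j, G j u := by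
    rw [Finset.erase_eq_of_notMem (by simp)]
  have hinner : ∀ r ∈ (Finset.range (k+1)).erase j,
      ∏ u ∈ Finset.Ico (r+1) (k+1), G r u
        = (if r < j then G r j else 1) * ∏ u ∈ (Finset.Ico (r+1) (k+1)).erase j, G r u := by
    intro r hr
    rw [Finset.mem_erase, Finset.mem_range] at hr
    by_cases h : r < j
    · rw [if_pos h, Finset.mul_prod_erase _ _ (by simp [Finset.mem_Ico]; omega)]
    · rw [if_neg h, one_mul, Finset.erase_eq_of_notMem (by simp [Finset.mem_Ico]; omega)]
  rw [Finset.prod_congr rfl hinner, Finset.prod_mul_distrib]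
  have hfil : ∏ r ∈ (Finset.range (k+1)).erase j, (if r < j then G r j else 1)
      = ∏ r ∈ Finset.range j, G r j := by
    rw [← Finset.prod_filter]
    apply Finset.prod_congr _ (fun _ _ => rfl)
    ext r
    simp only [Finset.mem_filter, Finset.mem_erase, Finset.mem_range]
    omega
  rw [hfil, hrow]
  ring

lemma fprod_step {k j : ℕ} (hj : j ≤ k) :
    fprod q x s k (j+1) * denp q x s k (j+1) = fprod q x s k j * denp q x s k j := by
  unfold fprod denp
  rw [split_pairs (fun r u => gfun q x s (mySA j r) (mySA j u)) hj,
      split_pairs (fun r u => gfun q x s (mySA (j+1) r) (mySA (j+1) u)) hj]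
  -- rest products agree
  have hrest : (∏ r ∈ (Finset.range (k+1)).erase j,
        ∏ u ∈ (Finset.Ico (r+1) (k+1)).erase j, gfun q x s (mySA (j+1) r) (mySA (j+1) u))
      = ∏ r ∈ (Finset.range (k+1)).erase j,
        ∏ u ∈ (Finset.Ico (r+1) (k+1)).erase j, gfun q x s (mySA j r) (mySA j u) := by
    refine Finset.prod_congr rfl fun r hr => Finset.prod_congr rfl fun u hu => ?_
    rw [Finset.mem_erase] at hr hu
    rw [mySA_eq_of_ne j r hr.1, mySA_eq_of_ne j u hu.1]
  rw [hrest]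
  -- identify the special factors
  have hsaj : mySA j j = j + 1 := by unfold mySA; simp
  have hsaj' : mySA (j+1) j = j := by unfold mySA; simp
  have hA : ∀ r ∈ Finset.range j, mySA j r = r := fun r hr => by
    unfold mySA; rw [if_pos (Finset.mem_range.1 hr)]
  have hA' : ∀ r ∈ Finset.range j, mySA (j+1) r = r := fun r hr => by
    unfold mySA; rw [if_pos (by have := Finset.mem_range.1 hr; omega)]
  have hU : ∀ u ∈ Finset.Ico (j+1) (k+1), mySA j u = u + 1 := fun u hu => by
    unfold mySA; rw [if_neg (by have := (Finset.mem_Ico.1 hu).1; omega)]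
  have hU' : ∀ u ∈ Finset.Ico (j+1) (k+1), mySA (j+1) u = u + 1 := fun u hu => by
    unfold mySA; rw [if_neg (by have := (Finset.mem_Ico.1 hu).1; omega)]
  have e1 : ∏ r ∈ Finset.range j, gfun q x s (mySA j r) (mySA j j)
      = ∏ r ∈ Finset.range j, gfun q x s r (j+1) :=
    Finset.prod_congr rfl fun r hr => by rw [hA r hr, hsaj]
  have e1' : ∏ r ∈ Finset.range j, gfun q x s (mySA (j+1) r) (mySA (j+1) j)
      = ∏ r ∈ Finset.range j, gfun q x s r j :=
    Finset.prod_congr rfl fun r hr => by rw [hA' r hr, hsaj']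
  have e2 : ∏ u ∈ Finset.Ico (j+1) (k+1), gfun q x s (mySA j j) (mySA j u)
      = ∏ u ∈ Finset.Ico (j+2) (k+2), gfun q x s (j+1) u := by
    rw [Finset.prod_Ico_eq_prod_range, Finset.prod_Ico_eq_prod_range,
      show k+1-(j+1) = k+2-(j+2) by omega]
    refine Finset.prod_congr rfl fun i hi => ?_
    rw [hsaj, hU (j+1+i) (by rw [Finset.mem_Ico]; rw [Finset.mem_range] at hi; omega)]
    congr 1
    omega
  have e2' : ∏ u ∈ Finset.Ico (j+1) (k+1), gfun q x s (mySA (j+1) j) (mySA (j+1) u)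
      = ∏ u ∈ Finset.Ico (j+2) (k+2), gfun q x s j u := by
    rw [Finset.prod_Ico_eq_prod_range, Finset.prod_Ico_eq_prod_range,
      show k+1-(j+1) = k+2-(j+2) by omega]
    refine Finset.prod_congr rfl fun i hi => ?_
    rw [hsaj', hU' (j+1+i) (by rw [Finset.mem_Ico]; rw [Finset.mem_range] at hi; omega)]
    congr 1
    omega
  rw [e1, e1', e2, e2']
  -- peel the den products
  have d1 : ∏ r ∈ Finset.range (j+1), gfun q x s r (j+1)
      = (∏ r ∈ Finset.range j, gfun q x s r (j+1)) * gfun q x s j (j+1) :=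
    Finset.prod_range_succ _ _
  have d2 : ∏ u ∈ Finset.Ico (j+1) (k+2), gfun q x s j u
      = gfun q x s j (j+1) * ∏ u ∈ Finset.Ico (j+2) (k+2), gfun q x s j u :=
    Finset.prod_eq_prod_Ico_succ_bot (by omega) _
  rw [d1, d2]
  ring

end comb

section comb2
variable (q x s : K)

lemma fprod_zero (k : ℕ) : fprod q x s k 0 * denp q x s k 0 = Phi q x s k := by
  unfold fprod denp Phi
  have hsa : ∀ i, mySA 0 i = i + 1 := fun i => by unfold mySA; simp
  rw [Finset.prod_range_succ' (fun r => ∏ u ∈ Finset.Ico (r+1) (k+2), gfun q x s r u) (k+1)]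
  simp only [Finset.range_zero, Finset.prod_empty, one_mul, zero_add]
  congr 1
  refine Finset.prod_congr rfl fun r _ => ?_
  rw [Finset.prod_Ico_eq_prod_range, Finset.prod_Ico_eq_prod_range,
    show k+2-(r+1+1) = k+1-(r+1) by omega]
  refine Finset.prod_congr rfl fun i _ => ?_
  rw [hsa, hsa]
  congr 1
  omega

lemma fprod_den (k : ℕ) : ∀ j, j ≤ k + 1 → fprod q x s k j * denp q x s k j = Phi q x s k := by
  intro j
  induction j with
  | zero => intro _; exact fprod_zero q x s k
  | succ j ih =>
    intro hj
    rw [fprod_step q x s (by omega : j ≤ k)]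
    exact ih (by omega)

lemma eprodP_step (k j : ℕ) (hj : j ≤ k) :
    eprodP q s k (j+1) * HPfun q s (j+1) ^ j = eprodP q s k j * HPfun q s j ^ j := by
  unfold eprodP
  have hjmem : j ∈ Finset.range (k+1) := Finset.mem_range.2 (by omega)
  rw [← Finset.mul_prod_erase _ _ hjmem, ← Finset.mul_prod_erase _ (fun i => HPfun q s (mySA j i) ^ i) hjmem]
  have hsaj : mySA j j = j + 1 := by unfold mySA; simp
  have hsaj' : mySA (j+1) j = j := by unfold mySA; simp
  rw [hsaj, hsaj']
  have hrest : ∏ i ∈ (Finset.range (k+1)).erase j, HPfun q s (mySA (j+1) i) ^ i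
      = ∏ i ∈ (Finset.range (k+1)).erase j, HPfun q s (mySA j i) ^ i :=
    Finset.prod_congr rfl fun i hi => by
      rw [mySA_eq_of_ne j i (Finset.mem_erase.1 hi).1]
  rw [hrest]
  ring

lemma sexp_step (k j : ℕ) (hj : j ≤ k) : sexp k j = sexp k (j+1) + j := by
  unfold sexp
  have hjmem : j ∈ Finset.range (k+1) := Finset.mem_range.2 (by omega)
  rw [← Finset.add_sum_erase _ _ hjmem, ← Finset.add_sum_erase _ (fun i => i * (mySA (j+1) i + 1)) hjmem]
  have hrest : ∑ i ∈ (Finset.range (k+1)).erase j, i * (mySA (j+1) i + 1)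
      = ∑ i ∈ (Finset.range (k+1)).erase j, i * (mySA j i + 1) :=
    Finset.sum_congr rfl fun i hi => by
      rw [mySA_eq_of_ne j i (Finset.mem_erase.1 hi).1]
  rw [hrest]
  have hsaj : mySA j j = j + 1 := by unfold mySA; simp
  have hsaj' : mySA (j+1) j = j := by unfold mySA; simp
  rw [hsaj, hsaj']
  ring

lemma prefP_step (hq : q ≠ 0) (hs : s ≠ 0) (j : ℕ) :
    prefP q s (j+1) * HPfun q s (j+1) ^ j = prefP q s j * HPfun q s j ^ j := by
  unfold prefP HPfun
  have h1 : (j+1).choose 2 = j + j.choose 2 := ch2succ j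
  rw [h1, Finset.sum_range_succ]
  rw [mul_pow, mul_pow, inv_pow, inv_pow, inv_pow, inv_pow, ← pow_mul, ← pow_mul,
    ← pow_mul, ← pow_mul]
  field_simp
  ring

lemma scalar_main (hq : q ≠ 0) (hs : s ≠ 0) (k : ℕ) : ∀ j, j ≤ k + 1 →
    ((-1:K) ^ ((j+1).choose 2) * prefP q s j) * (eprodP q s k 0 * (-1:K) ^ (sexp k 0))
      = ((-1:K) ^ ((0+1).choose 2) * prefP q s 0) *
          ((-1:K) ^ j * (-1:K) ^ (sexp k j) * eprodP q s k j) := by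
  intro j
  induction j with
  | zero => intro _; ring
  | succ j ih =>
    intro hj
    have Gj := ih (by omega)
    have hHP : HPfun q s (j+1) ≠ 0 := by
      unfold HPfun
      exact mul_ne_zero (inv_ne_zero (pow_ne_zero _ hq)) (inv_ne_zero (pow_ne_zero _ hs))
    have hHPj : HPfun q s j ≠ 0 := by
      unfold HPfun
      exact mul_ne_zero (inv_ne_zero (pow_ne_zero _ hq)) (inv_ne_zero (pow_ne_zero _ hs))
    apply mul_right_cancel₀ (pow_ne_zero j hHP)
    have es := eprodP_step q s k j (by omega)
    have ps := prefP_step q s hq hs j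
    have ss := sexp_step k j (by omega)
    rw [ss] at Gj
    rw [show (j+1+1).choose 2 = (j+1) + (j+1).choose 2 from ch2succ (j+1)]
    have hsq : (-1:K) ^ j * (-1:K) ^ j = 1 := by
      rw [← pow_add, ← two_mul, pow_mul]
      norm_num
    linear_combination (-((-1:K)^((j+1).choose 2) * (-1:K)^j * (eprodP q s k 0 * (-1:K)^(sexp k 0)))) * ps
      + ((-1:K)^((0+1).choose 2) * prefP q s 0 * (-1:K)^j * (-1:K)^(sexp k (j+1))) * es
      + (-((-1:K)^j * HPfun q s j ^ j)) * Gj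
      + (-((-1:K)^((0+1).choose 2) * prefP q s 0 * (-1:K)^j * (-1:K)^(sexp k (j+1)) *
          eprodP q s k j * HPfun q s j ^ j)) * hsq

end comb2

section laplace
variable (q x s : K)

lemma cas_inv (hq : q ≠ 0) (hs : s ≠ 0) {a b : ℕ} (hab : a ≤ b) :
    Dseq q x s 0 b * Dseq q x s 1 a - Dseq q x s 0 a * Dseq q x s 1 b
      = (-1:K)^(b+1) * HPfun q s b * gfun q x s a b := by
  have h := cas_formula q x s hq hs a (b - a)
  rw [show a + (b - a) = b by omega] at h
  have hg : gfun q x s a b = qFib q x (q^a*s) ((b - a : ℕ) : ℤ) := by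
    unfold gfun; congr 1; omega
  rw [hg]
  unfold HPfun
  have hqc : (q:K) ^ (b.choose 2) ≠ 0 := pow_ne_zero _ hq
  have hsb : (s:K) ^ b ≠ 0 := pow_ne_zero _ hs
  rw [show ((b - a : ℕ) : ℤ) = (b:ℤ) - (a:ℤ) by omega] at h
  field_simp
  rw [show ((b - a : ℕ) : ℤ) = (b:ℤ) - (a:ℤ) by omega]
  linear_combination (-(1:K)) * h

lemma succAbove_coe {k : ℕ} (p : Fin (k+2)) (i : Fin (k+1)) :
    ((p.succAbove i : Fin (k+2)) : ℕ) = mySA (p:ℕ) (i:ℕ) := by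
  unfold mySA
  by_cases h : (i : ℕ) < (p : ℕ)
  · rw [if_pos h, Fin.succAbove_of_castSucc_lt _ _ (by rwa [Fin.lt_iff_val_lt_val])]
    simp
  · rw [if_neg h, Fin.succAbove_of_le_castSucc _ _ (by
      rw [Fin.le_iff_val_le_val]; simpa using not_lt.1 h)]
    simp

lemma prod_Ioi_coe {n : ℕ} (f : ℕ → K) (r : Fin n) :
    ∏ r' ∈ Finset.Ioi r, f (r' : ℕ) = ∏ u ∈ Finset.Ico ((r:ℕ)+1) n, f u := by
  have hset : Finset.Ico ((r:ℕ)+1) n = Finset.map Fin.valEmbedding (Finset.Ioi r) := by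
    rw [Fin.map_valEmbedding_Ioi]
    ext u
    simp only [Finset.mem_Ioo, Finset.mem_Ico]
    have := r.isLt
    omega
  rw [hset, Finset.prod_map]
  rfl

lemma laplace_sum (hq : q ≠ 0) (hs : s ≠ 0) (k a : ℕ) (ha : a ≤ k) :
    ∑ j ∈ Finset.range (k+2), (-1:K)^j *
      ((-1:K)^(sexp k j) * eprodP q s k j * fprod q x s k j) *
      (Dseq q x s 0 j ^ a * Dseq q x s 1 j ^ (k - a)) = 0 := by
  classical
  set U : ℕ → K := fun j => Dseq q x s 0 j with hU
  set V : ℕ → K := fun j => Dseq q x s 1 j with hV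
  set row0 : Fin (k+2) → K := fun p => U (p:ℕ) ^ a * V (p:ℕ) ^ (k - a) with hrow0
  set rows : Fin (k+1) → Fin (k+2) → K :=
    fun b p => U (p:ℕ) ^ (b:ℕ) * V (p:ℕ) ^ (k - (b:ℕ)) with hrows
  set A : Matrix (Fin (k+2)) (Fin (k+2)) K := Matrix.of (Fin.cons row0 rows) with hA
  have hdet : A.det = 0 := by
    have hne : (0 : Fin (k+2)) ≠ ⟨a+1, by omega⟩ := by
      intro hcon
      have := congrArg Fin.val hcon
      simp at this
    have hroweq : A 0 = A ⟨a+1, by omega⟩ := by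
      funext p
      show (Fin.cons row0 rows : Fin (k+2) → Fin (k+2) → K) 0 p
        = (Fin.cons row0 rows : Fin (k+2) → Fin (k+2) → K) ⟨a+1, by omega⟩ p
      rw [show (⟨a+1, by omega⟩ : Fin (k+2)) = Fin.succ ⟨a, by omega⟩ from rfl,
        Fin.cons_zero, Fin.cons_succ]
    exact Matrix.det_zero_of_row_eq hne hroweq
  rw [Matrix.det_succ_row_zero] at hdet
  -- evaluate each minor
  have hminor : ∀ p : Fin (k+2), (A.submatrix Fin.succ p.succAbove).det
      = (-1:K)^(sexp k (p:ℕ)) * eprodP q s k (p:ℕ) * fprod q x s k (p:ℕ) := by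
    intro p
    have hsub : A.submatrix Fin.succ p.succAbove
        = Matrix.of (fun (i r : Fin (k+1)) =>
            (fun r' : Fin (k+1) => U ((p.succAbove r' : Fin (k+2)) : ℕ)) r ^ (i:ℕ) *
            (fun r' : Fin (k+1) => V ((p.succAbove r' : Fin (k+2)) : ℕ)) r ^ (k+1-1-(i:ℕ))) := by
      ext i r
      show (Fin.cons row0 rows : Fin (k+2) → Fin (k+2) → K) (Fin.succ i) (p.succAbove r) = _
      rw [Fin.cons_succ]
      show U _ ^ (i:ℕ) * V _ ^ (k - (i:ℕ)) = _
      rfl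
    rw [hsub, hvdm]
    have hpair : ∀ (r r' : Fin (k+1)), r' ∈ Finset.Ioi r →
        (U ((p.succAbove r' : Fin (k+2)) : ℕ) * V ((p.succAbove r : Fin (k+2)) : ℕ)
          - U ((p.succAbove r : Fin (k+2)) : ℕ) * V ((p.succAbove r' : Fin (k+2)) : ℕ))
        = ((-1:K)^(mySA (p:ℕ) (r':ℕ) + 1) * HPfun q s (mySA (p:ℕ) (r':ℕ))) *
            gfun q x s (mySA (p:ℕ) (r:ℕ)) (mySA (p:ℕ) (r':ℕ)) := by
      intro r r' hr'
      rw [Finset.mem_Ioi] at hr'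
      rw [succAbove_coe, succAbove_coe]
      have hlt : mySA (p:ℕ) (r:ℕ) < mySA (p:ℕ) (r':ℕ) := mySA_lt _ (by exact hr')
      exact cas_inv q x s hq hs (le_of_lt hlt)
    calc ∏ r : Fin (k+1), ∏ r' ∈ Finset.Ioi r,
          (U ((p.succAbove r' : Fin (k+2)) : ℕ) * V ((p.succAbove r : Fin (k+2)) : ℕ)
            - U ((p.succAbove r : Fin (k+2)) : ℕ) * V ((p.succAbove r' : Fin (k+2)) : ℕ))
        = ∏ r : Fin (k+1), ∏ r' ∈ Finset.Ioi r,
            (((-1:K)^(mySA (p:ℕ) (r':ℕ) + 1) * HPfun q s (mySA (p:ℕ) (r':ℕ))) *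
              gfun q x s (mySA (p:ℕ) (r:ℕ)) (mySA (p:ℕ) (r':ℕ))) :=
          Finset.prod_congr rfl fun r _ => Finset.prod_congr rfl fun r' hr' => hpair r r' hr'
      _ = (∏ r : Fin (k+1), ∏ r' ∈ Finset.Ioi r,
            ((-1:K)^(mySA (p:ℕ) (r':ℕ) + 1) * HPfun q s (mySA (p:ℕ) (r':ℕ)))) *
          ∏ r : Fin (k+1), ∏ r' ∈ Finset.Ioi r,
            gfun q x s (mySA (p:ℕ) (r:ℕ)) (mySA (p:ℕ) (r':ℕ)) := by
          rw [← Finset.prod_mul_distrib]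
          exact Finset.prod_congr rfl fun r _ => Finset.prod_mul_distrib
      _ = (-1:K)^(sexp k (p:ℕ)) * eprodP q s k (p:ℕ) * fprod q x s k (p:ℕ) := by
          rw [prod_Ioi_fun (fun r' : Fin (k+1) =>
            (-1:K)^(mySA (p:ℕ) (r':ℕ) + 1) * HPfun q s (mySA (p:ℕ) (r':ℕ)))]
          have h1 : ∏ r' : Fin (k+1),
              ((-1:K)^(mySA (p:ℕ) (r':ℕ) + 1) * HPfun q s (mySA (p:ℕ) (r':ℕ))) ^ (r':ℕ)
              = (-1:K)^(sexp k (p:ℕ)) * eprodP q s k (p:ℕ) := by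
            rw [Fin.prod_univ_eq_prod_range
              (fun i => ((-1:K)^(mySA (p:ℕ) i + 1) * HPfun q s (mySA (p:ℕ) i)) ^ i)]
            unfold sexp eprodP
            calc ∏ i ∈ Finset.range (k+1),
                  ((-1:K)^(mySA (p:ℕ) i + 1) * HPfun q s (mySA (p:ℕ) i)) ^ i
                = ∏ i ∈ Finset.range (k+1),
                    ((-1:K)^(i * (mySA (p:ℕ) i + 1)) * HPfun q s (mySA (p:ℕ) i) ^ i) := by
                  refine Finset.prod_congr rfl fun i _ => ?_
                  rw [mul_pow, ← pow_mul, Nat.mul_comm]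
              _ = (∏ i ∈ Finset.range (k+1), (-1:K)^(i * (mySA (p:ℕ) i + 1))) *
                  ∏ i ∈ Finset.range (k+1), HPfun q s (mySA (p:ℕ) i) ^ i :=
                  Finset.prod_mul_distrib
              _ = (-1:K)^(∑ i ∈ Finset.range (k+1), i * (mySA (p:ℕ) i + 1)) *
                  ∏ i ∈ Finset.range (k+1), HPfun q s (mySA (p:ℕ) i) ^ i := by
                  rw [Finset.prod_pow_eq_pow_sum]
          have h2 : (∏ r : Fin (k+1), ∏ r' ∈ Finset.Ioi r,
              gfun q x s (mySA (p:ℕ) (r:ℕ)) (mySA (p:ℕ) (r':ℕ)))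
              = fprod q x s k (p:ℕ) := by
            unfold fprod
            calc ∏ r : Fin (k+1), ∏ r' ∈ Finset.Ioi r,
                  gfun q x s (mySA (p:ℕ) (r:ℕ)) (mySA (p:ℕ) (r':ℕ))
                = ∏ r : Fin (k+1), ∏ u ∈ Finset.Ico ((r:ℕ)+1) (k+1),
                    gfun q x s (mySA (p:ℕ) (r:ℕ)) (mySA (p:ℕ) u) :=
                  Finset.prod_congr rfl fun r _ =>
                    prod_Ioi_coe (fun u => gfun q x s (mySA (p:ℕ) (r:ℕ)) (mySA (p:ℕ) u)) r
              _ = ∏ r ∈ Finset.range (k+1), ∏ u ∈ Finset.Ico (r+1) (k+1),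
                    gfun q x s (mySA (p:ℕ) r) (mySA (p:ℕ) u) :=
                  Fin.prod_univ_eq_prod_range
                    (fun r => ∏ u ∈ Finset.Ico (r+1) (k+1),
                      gfun q x s (mySA (p:ℕ) r) (mySA (p:ℕ) u)) (k+1)
          rw [h1, h2]
  -- now rewrite the Laplace expansion
  have hA0 : ∀ p : Fin (k+2), A 0 p = U (p:ℕ) ^ a * V (p:ℕ) ^ (k - a) := fun p => by
    show (Fin.cons row0 rows : Fin (k+2) → Fin (k+2) → K) 0 p = _
    rw [Fin.cons_zero]
  rw [← Fin.sum_univ_eq_sum_range (fun j => (-1:K)^j *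
      ((-1:K)^(sexp k j) * eprodP q s k j * fprod q x s k j) *
      (Dseq q x s 0 j ^ a * Dseq q x s 1 j ^ (k - a))) (k+2)]
  rw [← hdet]
  apply Finset.sum_congr rfl
  intro p _
  rw [hminor p, hA0 p]
  ring

end laplace

section final
variable (q x s : K)

lemma fibonomial_eq (k j : ℕ) (hj : j ≤ k + 1) :
    qFibonomial q x s (k+1) j
      = (∏ i ∈ Finset.range (k+1), qFib q x s (i + 1)) / denp q x s k j := by
  unfold qFibonomial denp
  congr 1
  have hD1 : ∏ i ∈ Finset.range j, qFib q x (q ^ (j - (i+1)) * s) ((i : ℤ) + 1)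
      = ∏ r ∈ Finset.range j, gfun q x s r j := by
    calc ∏ i ∈ Finset.range j, qFib q x (q ^ (j - (i+1)) * s) ((i : ℤ) + 1)
        = ∏ i ∈ Finset.range j, gfun q x s (j-1-i) j := by
          refine Finset.prod_congr rfl fun i hi => ?_
          have hij : i < j := Finset.mem_range.1 hi
          unfold gfun
          rw [show (j:ℤ) - ((j - 1 - i : ℕ):ℤ) = (i:ℤ)+1 by omega,
            show j - 1 - i = j - (i+1) by omega]
      _ = ∏ r ∈ Finset.range j, gfun q x s r j :=
          Finset.prod_range_reflect (fun r => gfun q x s r j) j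
  have hD2 : ∏ i ∈ Finset.range (k+1-j), qFib q x (q ^ j * s) ((i : ℤ) + 1)
      = ∏ u ∈ Finset.Ico (j+1) (k+2), gfun q x s j u := by
    rw [Finset.prod_Ico_eq_prod_range, show k+2-(j+1) = k+1-j by omega]
    refine Finset.prod_congr rfl fun i _ => ?_
    unfold gfun
    congr 1
    omega
  rw [← hD1, ← hD2]

lemma dual_sum (hq : q ≠ 0) (hs : s ≠ 0) (k : ℕ)
    (gnz : ∀ r u : ℕ, r < u → u ≤ k+1 → gfun q x s r u ≠ 0)
    (a : ℕ) (ha : a ≤ k) :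
    ∑ j ∈ Finset.range (k+2),
      ((-1:K)^((j+1).choose 2) * prefP q s j * qFibonomial q x s (k+1) j) *
        (Dseq q x s 0 j ^ a * Dseq q x s 1 j ^ (k - a)) = 0 := by
  have hHP : ∀ u, HPfun q s u ≠ 0 := fun u =>
    mul_ne_zero (inv_ne_zero (pow_ne_zero _ hq)) (inv_ne_zero (pow_ne_zero _ hs))
  have heprod : ∀ j, eprodP q s k j ≠ 0 := fun j =>
    Finset.prod_ne_zero_iff.2 fun i _ => pow_ne_zero _ (hHP _)
  have hdenp : ∀ j, j ≤ k+1 → denp q x s k j ≠ 0 := by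
    intro j hj
    refine mul_ne_zero (Finset.prod_ne_zero_iff.2 fun r hr => ?_)
      (Finset.prod_ne_zero_iff.2 fun u hu => ?_)
    · exact gnz r j (Finset.mem_range.1 hr) hj
    · rw [Finset.mem_Ico] at hu
      exact gnz j u (by omega) (by omega)
  have hPhi : Phi q x s k ≠ 0 := by
    refine Finset.prod_ne_zero_iff.2 fun r hr => Finset.prod_ne_zero_iff.2 fun u hu => ?_
    rw [Finset.mem_Ico] at hu
    exact gnz r u (by omega) (by omega)
  have hfprod : ∀ j, fprod q x s k j ≠ 0 := by
    intro j
    refine Finset.prod_ne_zero_iff.2 fun r hr => Finset.prod_ne_zero_iff.2 fun u hu => ?_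
    rw [Finset.mem_Ico] at hu
    rw [Finset.mem_range] at hr
    exact gnz _ _ (mySA_lt j (by omega)) (by have := mySA_le j u; omega)
  have hsign : ∀ m : ℕ, ((-1:K)^m) ≠ 0 := fun m => pow_ne_zero _ (by norm_num)
  set N : K := ∏ i ∈ Finset.range (k+1), qFib q x s (i + 1) with hN
  set C0 : K := (-1:K)^((0+1).choose 2) * prefP q s 0 with hC0
  set E0 : K := eprodP q s k 0 * (-1:K)^(sexp k 0) with hE0
  have hE0ne : E0 ≠ 0 := mul_ne_zero (heprod 0) (hsign _)
  have key : ∀ j, j ≤ k + 1 →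
      ((-1:K)^((j+1).choose 2) * prefP q s j * qFibonomial q x s (k+1) j)
        = (C0 * N / (E0 * Phi q x s k)) *
          ((-1:K)^j * ((-1:K)^(sexp k j) * eprodP q s k j * fprod q x s k j)) := by
    intro j hj
    rw [fibonomial_eq q x s k j hj]
    have sm := scalar_main q s hq hs k j hj
    have fd := fprod_den q x s k j hj
    rw [mul_div_assoc', div_mul_eq_mul_div,
      div_eq_div_iff (hdenp j hj) (mul_ne_zero hE0ne hPhi)]
    linear_combination (N * Phi q x s k) * sm
      - (C0 * N * (-1:K)^j * (-1:K)^(sexp k j) * eprodP q s k j) * fd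
  calc ∑ j ∈ Finset.range (k+2),
      ((-1:K)^((j+1).choose 2) * prefP q s j * qFibonomial q x s (k+1) j) *
        (Dseq q x s 0 j ^ a * Dseq q x s 1 j ^ (k - a))
      = ∑ j ∈ Finset.range (k+2), (C0 * N / (E0 * Phi q x s k)) *
          ((-1:K)^j * ((-1:K)^(sexp k j) * eprodP q s k j * fprod q x s k j) *
            (Dseq q x s 0 j ^ a * Dseq q x s 1 j ^ (k - a))) := by
        refine Finset.sum_congr rfl fun j hj => ?_
        rw [key j (by have := Finset.mem_range.1 hj; omega)]
        ring
    _ = (C0 * N / (E0 * Phi q x s k)) * ∑ j ∈ Finset.range (k+2),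
          (-1:K)^j * ((-1:K)^(sexp k j) * eprodP q s k j * fprod q x s k j) *
            (Dseq q x s 0 j ^ a * Dseq q x s 1 j ^ (k - a)) := by
        rw [Finset.mul_sum]
    _ = 0 := by rw [laplace_sum q x s hq hs k a ha, mul_zero]

end final


theorem qFib_pow_recurrence (q x s : K) (hq : q ≠ 0) (hs : s ≠ 0)
    (k : ℕ) (hk : 1 ≤ k) (n : ℤ)
    (hden : ∀ j ≤ k + 1,
      (∀ i, 1 ≤ i → i ≤ j → qFib q x (q ^ (j - i) * s) (i : ℤ) ≠ 0) ∧
      (∀ i, 1 ≤ i → i ≤ k + 1 - j → qFib q x (q ^ j * s) (i : ℤ) ≠ 0)) :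
    ∑ j ∈ Finset.range (k + 2),
      (-1 : K) ^ ((j + 1).choose 2) * s ^ (j.choose 2) *
        q ^ (∑ i ∈ Finset.range j, i ^ 2) *
        qFibonomial q x s (k + 1) j * qFib q x (q ^ j * s) (n - j) ^ k = 0 := by
  have gnz : ∀ r u : ℕ, r < u → u ≤ k+1 → gfun q x s r u ≠ 0 := by
    intro r u hru huk
    have h := (hden r (by omega)).2 (u - r) (by omega) (by omega)
    unfold gfun
    rw [show ((u:ℤ) - r) = ((u - r : ℕ) : ℤ) by omega]
    exact h
  have expand : ∀ j, qFib q x (q ^ j * s) (n - (j:ℕ)) ^ k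
      = ∑ a ∈ Finset.range (k+1),
          ((s * Dseq q x s n 1) ^ a * Dseq q x s n 0 ^ (k - a) * ((k.choose a : K))) *
            (Dseq q x s 0 j ^ a * Dseq q x s 1 j ^ (k - a)) := by
    intro j
    have hD : qFib q x (q ^ j * s) (n - (j:ℕ)) = Dseq q x s n j := rfl
    rw [hD, Dseq_expand q x s hq hs n j, add_pow]
    refine Finset.sum_congr rfl fun a _ => ?_
    rw [mul_pow, mul_pow]
    ring
  calc ∑ j ∈ Finset.range (k + 2),
      (-1 : K) ^ ((j + 1).choose 2) * s ^ (j.choose 2) *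
        q ^ (∑ i ∈ Finset.range j, i ^ 2) *
        qFibonomial q x s (k + 1) j * qFib q x (q ^ j * s) (n - j) ^ k
      = ∑ j ∈ Finset.range (k + 2), ∑ a ∈ Finset.range (k+1),
          ((s * Dseq q x s n 1) ^ a * Dseq q x s n 0 ^ (k - a) * ((k.choose a : K))) *
            (((-1:K)^((j+1).choose 2) * prefP q s j * qFibonomial q x s (k+1) j) *
              (Dseq q x s 0 j ^ a * Dseq q x s 1 j ^ (k - a))) := by
        refine Finset.sum_congr rfl fun j _ => ?_
        rw [expand j, Finset.mul_sum]
        refine Finset.sum_congr rfl fun a _ => ?_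
        unfold prefP
        ring
    _ = ∑ a ∈ Finset.range (k+1), ∑ j ∈ Finset.range (k + 2),
          ((s * Dseq q x s n 1) ^ a * Dseq q x s n 0 ^ (k - a) * ((k.choose a : K))) *
            (((-1:K)^((j+1).choose 2) * prefP q s j * qFibonomial q x s (k+1) j) *
              (Dseq q x s 0 j ^ a * Dseq q x s 1 j ^ (k - a))) := Finset.sum_comm
    _ = ∑ a ∈ Finset.range (k+1),
          ((s * Dseq q x s n 1) ^ a * Dseq q x s n 0 ^ (k - a) * ((k.choose a : K))) *
          ∑ j ∈ Finset.range (k + 2),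
            (((-1:K)^((j+1).choose 2) * prefP q s j * qFibonomial q x s (k+1) j) *
              (Dseq q x s 0 j ^ a * Dseq q x s 1 j ^ (k - a))) := by
        exact Finset.sum_congr rfl fun a _ => (Finset.mul_sum _ _ _).symm
    _ = 0 := by
        refine Finset.sum_eq_zero fun a ha => ?_
        rw [dual_sum q x s hq hs k gnz a (by have := Finset.mem_range.1 ha; omega), mul_zero]
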